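/- (Step-size difference bound, opposing case) In the one-dimensional setting with g_t and g_{1:t−1} of opposite signs and |g_t| ≤ L, p > 0, and M_t, η_t defined as in the rescaledexp algorithm (so that M_{t−1} + ∑_{s<t} g_s² ≥ |g_{1:t−1}|/p), one has |η_{t−1}·|g_{1:t−1}| − η_t·|g_{1:t}|| ≤ (1 + pL/2)·η_t·|g_t|. -/

import Mathlib

open Finset
set_option maxHeartbeats 1000000


private lemma stmt10_aux (G S : ℝ) (hopp : G * S ≤ 0) (h1 : S ^ 2 < (S + G) ^ 2) :
    (S + G) ^ 2 ≤ G ^ 2 := by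
  nlinarith [sq_nonneg (S + G), sq_nonneg (2 * S + G), sq_nonneg S, sq_nonneg G,
    mul_nonneg (mul_nonneg (neg_nonneg.mpr hopp) (neg_nonneg.mpr hopp)) (sq_nonneg S)]

/-- Step-size difference bound, opposing case (one dimension). -/
theorem stmt10 (g : ℕ → ℝ) (p k L : ℝ) (hp : 0 < p) (hk : 0 < k) (t : ℕ) (ht : 1 ≤ t)
    (M η : ℕ → ℝ) (hM0 : M 0 = 0)
    (hM : ∀ s, 1 ≤ s → M s = max (M (s - 1))
      (|(∑ r ∈ Icc 1 s, g r)| / p - ∑ r ∈ Icc 1 s, g r ^ 2))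
    (hη : ∀ s, η s = 1 / (k * Real.sqrt 2 * Real.sqrt (M s + ∑ r ∈ Icc 1 s, g r ^ 2)))
    (hopp : g t * ∑ r ∈ Icc 1 (t - 1), g r ≤ 0) (hgt : |g t| ≤ L) :
    abs (η (t - 1) * |(∑ r ∈ Icc 1 (t - 1), g r)| - η t * |(∑ r ∈ Icc 1 t, g r)|) ≤
      (1 + p * L / 2) * (η t * |g t|) := by
  have hL0 : 0 ≤ L := le_trans (abs_nonneg _) hgt
  have hc : (0:ℝ) < k * Real.sqrt 2 := by positivity
  set c := k * Real.sqrt 2 with hcdef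
  set S := ∑ r ∈ Icc 1 (t-1), g r with hSdef
  set Q := ∑ r ∈ Icc 1 (t-1), g r ^ 2 with hQdef
  have htt : t - 1 + 1 = t := Nat.succ_pred_eq_of_pos ht
  have hsum : ∑ r ∈ Icc 1 t, g r = S + g t := by
    conv_lhs => rw [← htt]
    rw [Finset.sum_Icc_succ_top (by omega), htt, ← hSdef]
  have hsumq : ∑ r ∈ Icc 1 t, g r ^ 2 = Q + g t ^ 2 := by
    conv_lhs => rw [← htt]
    rw [Finset.sum_Icc_succ_top (by omega), htt, ← hQdef]
  set X := M (t-1) + Q with hXdef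
  have hXS : |S| / p ≤ X := by
    rcases eq_or_lt_of_le ht with h1 | h2
    · have h0 : t - 1 = 0 := by omega
      have hSe : S = 0 := by
        rw [hSdef, h0, show Finset.Icc 1 0 = ∅ from Finset.Icc_eq_empty (by omega),
          Finset.sum_empty]
      have hQe : Q = 0 := by
        rw [hQdef, h0, show Finset.Icc 1 0 = ∅ from Finset.Icc_eq_empty (by omega),
          Finset.sum_empty]
      rw [hXdef, hSe, hQe, h0, hM0]
      simp
    · have h := hM (t-1) (by omega)
      rw [← hSdef, ← hQdef] at h
      have h2' : |S| / p - Q ≤ M (t-1) := h ▸ le_max_right _ _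
      rw [hXdef]; linarith
  have hSp0 : (0:ℝ) ≤ |S| / p := by positivity
  have hX0 : 0 ≤ X := le_trans hSp0 hXS
  set D := M t + (Q + g t ^ 2) with hDdef
  have hMt := hM t ht
  rw [hsum, hsumq] at hMt
  have hDmax : D = max (X + g t ^ 2) (|S + g t| / p) := by
    rw [hDdef, hMt, ← max_add_add_right]
    congr 1
    · rw [hXdef]; ring
    · ring
  have hDlb : X + g t ^ 2 ≤ D := hDmax ▸ le_max_left _ _
  have hD0 : 0 ≤ D := by linarith [sq_nonneg (g t)]
  have hηt : η t = 1 / (c * Real.sqrt D) := by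
    rw [hη t, hsumq, ← hDdef]
  have hηt1 : η (t-1) = 1 / (c * Real.sqrt X) := by
    rw [hη (t-1), ← hQdef, ← hXdef]
  have hηtn : 0 ≤ η t := by rw [hηt]; positivity
  have hRHSfac : 0 ≤ p * L / 2 := by positivity
  clear_value c S Q X D
  rw [hsum]
  by_cases hSz : S = 0
  · rw [hSz]
    simp only [abs_zero, mul_zero, zero_sub, abs_neg, zero_add]
    rw [abs_of_nonneg (mul_nonneg hηtn (abs_nonneg _))]
    linarith [mul_nonneg hηtn (abs_nonneg (g t)),
      mul_nonneg hRHSfac (mul_nonneg hηtn (abs_nonneg (g t)))]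
  · have hSpos : 0 < |S| := abs_pos.mpr hSz
    have hXpos : 0 < X := lt_of_lt_of_le (by positivity) hXS
    set a := Real.sqrt X with hadef
    set b := Real.sqrt D with hbdef
    have ha2 : a ^ 2 = X := Real.sq_sqrt hX0
    have hb2 : b ^ 2 = D := Real.sq_sqrt hD0
    have hapos : 0 < a := Real.sqrt_pos.mpr hXpos
    have hbpos : 0 < b := Real.sqrt_pos.mpr (by linarith [sq_nonneg (g t)])
    clear_value a b
    have hab : a ≤ b := by rw [hadef, hbdef]; exact Real.sqrt_le_sqrt (by linarith [sq_nonneg (g t)])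
    have hmono : η t ≤ η (t-1) := by
      rw [hηt, hηt1]
      apply div_le_div_of_nonneg_left one_pos.le (by positivity)
      exact mul_le_mul_of_nonneg_left hab hc.le
    rw [abs_sub_le_iff]
    constructor
    · -- hard direction
      rcases le_or_gt (|S + g t| / p) (X + g t ^ 2) with hcase | hcase
      · -- D = X + g^2
        have hDeq : D = X + g t ^ 2 := by rw [hDmax, max_eq_left hcase]
        have hble : b ≤ a + g t ^ 2 / (2 * a) := by
          have h1 : D ≤ (a + g t ^ 2 / (2 * a)) ^ 2 := by
            rw [hDeq, ← ha2]
            have : (a + g t ^ 2 / (2 * a)) ^ 2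
                = a ^ 2 + g t ^ 2 + (g t ^ 2 / (2 * a)) ^ 2 := by
              field_simp; ring
            linarith [sq_nonneg (g t ^ 2 / (2 * a))]
          calc b = Real.sqrt D := hbdef
          _ ≤ Real.sqrt ((a + g t ^ 2 / (2 * a)) ^ 2) := Real.sqrt_le_sqrt h1
          _ = a + g t ^ 2 / (2 * a) := Real.sqrt_sq (by positivity)
        have hkey : η (t-1) - η t ≤ g t ^ 2 / (2 * X) * η t := by
          rw [hηt, hηt1]
          have he : 1 / (c * a) - 1 / (c * b) = (b - a) / (c * a * b) := by
            field_simp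
          rw [he]
          have h2 : (b - a) / (c * a * b) ≤ (g t ^ 2 / (2 * a)) / (c * a * b) := by
            gcongr
            linarith
          calc (b - a) / (c * a * b) ≤ (g t ^ 2 / (2 * a)) / (c * a * b) := h2
          _ = g t ^ 2 / (2 * X) * (1 / (c * b)) := by
              rw [← ha2]; ring
        have habs : |S| - |S + g t| ≤ |g t| := by
          have := abs_add_le (S + g t) (-(g t))
          simp only [add_neg_cancel_right, abs_neg] at this
          linarith
        have hSX : |S| ≤ p * X := by
          rw [div_le_iff₀ hp] at hXS; linarith
        have h3 : |S| * (η (t-1) - η t) ≤ p * L / 2 * (η t * |g t|) := by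
          have h4 : |S| * (η (t-1) - η t) ≤ |S| * (g t ^ 2 / (2 * X) * η t) :=
            mul_le_mul_of_nonneg_left hkey (abs_nonneg S)
          have h5 : |S| * (g t ^ 2 / (2 * X) * η t) ≤ p * X * (g t ^ 2 / (2 * X) * η t) := by
            apply mul_le_mul_of_nonneg_right hSX
            positivity
          have h6 : p * X * (g t ^ 2 / (2 * X) * η t) = p / 2 * g t ^ 2 * η t := by
            field_simp
          have hg2 : g t ^ 2 ≤ L * |g t| := by
            rw [← sq_abs, sq]
            exact mul_le_mul_of_nonneg_right hgt (abs_nonneg _)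
          have h7 : p / 2 * g t ^ 2 * η t ≤ p / 2 * (L * |g t|) * η t := by
            apply mul_le_mul_of_nonneg_right _ hηtn
            exact mul_le_mul_of_nonneg_left hg2 (by positivity)
          linarith
        have h8 : η t * (|S| - |S + g t|) ≤ η t * |g t| :=
          mul_le_mul_of_nonneg_left habs hηtn
        linarith
      · -- D = |S+g t|/p
        have hDeq : D = |S + g t| / p := by rw [hDmax, max_eq_right hcase.le]
        -- |S + g t| > |S|, and with opposing signs |S + g t| ≤ |g t|
        have hSS : |S| < |S + g t| := by
          have h1 : |S| / p < |S + g t| / p := lt_of_le_of_lt hXS (by linarith [sq_nonneg (g t)])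
          exact (div_lt_div_iff_of_pos_right hp).mp h1
        have hopp' : g t * S ≤ 0 := hopp
        have hSg : |S + g t| ≤ |g t| := by
          have h1 : S ^ 2 < (S + g t) ^ 2 := by
            rw [← sq_abs S, ← sq_abs (S + g t)]
            exact pow_lt_pow_left₀ hSS (abs_nonneg S) two_ne_zero
          have h2 : (S + g t) ^ 2 ≤ g t ^ 2 := stmt10_aux (g t) S hopp' h1
          have h3 := Real.sqrt_le_sqrt h2
          rwa [Real.sqrt_sq_eq_abs, Real.sqrt_sq_eq_abs] at h3
        -- η(t-1)|S| ≤ η t |g t|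
        have hgoal : η (t-1) * |S| ≤ η t * |g t| := by
          rw [hηt, hηt1]
          rw [div_mul_eq_mul_div, div_mul_eq_mul_div, one_mul, one_mul,
            div_le_div_iff₀ (by positivity) (by positivity)]
          -- |S| * (c * b) ≤ |g t| * (c * a)
          have hbb : b ^ 2 = |S + g t| / p := by rw [hb2, hDeq]
          have haX : |S| / p ≤ a ^ 2 := by rw [ha2]; exact hXS
          have hsq : (|S| * b) ^ 2 ≤ (|g t| * a) ^ 2 := by
            have e1 : (|S| * b) ^ 2 = S ^ 2 * (|S + g t| / p) := by
              rw [mul_pow, hbb, sq_abs]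
            have e2 : g t ^ 2 * (|S| / p) ≤ (|g t| * a) ^ 2 := by
              rw [mul_pow, sq_abs]
              exact mul_le_mul_of_nonneg_left haX (sq_nonneg _)
            have hSle : |S| ≤ |g t| := le_trans hSS.le hSg
            have h5 : S ^ 2 ≤ |S| * |g t| := by
              rw [← sq_abs S, sq]
              exact mul_le_mul_of_nonneg_left hSle (abs_nonneg S)
            have e41 := mul_le_mul_of_nonneg_right h5 (abs_nonneg (S + g t))
            have e42 := mul_le_mul_of_nonneg_left hSg
              (mul_nonneg (abs_nonneg S) (abs_nonneg (g t)))
            have e5 : |S| * |g t| * |g t| = g t ^ 2 * |S| := by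
              rw [mul_assoc, ← sq, sq_abs]; ring
            have e4 : S ^ 2 * |S + g t| ≤ g t ^ 2 * |S| := by linarith
            have e3 : S ^ 2 * (|S + g t| / p) ≤ g t ^ 2 * (|S| / p) := by
              rw [← mul_div_assoc, ← mul_div_assoc]
              gcongr
            linarith
          have h6 : |S| * b ≤ |g t| * a := by
            have h7 := Real.sqrt_le_sqrt hsq
            rwa [Real.sqrt_sq (by positivity), Real.sqrt_sq (by positivity)] at h7
          calc |S| * (c * b) = c * (|S| * b) := by ring
          _ ≤ c * (|g t| * a) := mul_le_mul_of_nonneg_left h6 hc.le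
          _ = |g t| * (c * a) := by ring
        have hB : 0 ≤ η t * |S + g t| := mul_nonneg hηtn (abs_nonneg _)
        linarith [mul_nonneg hRHSfac (mul_nonneg hηtn (abs_nonneg (g t)))]
    · -- easy direction
      have habs : |S + g t| ≤ |S| + |g t| := abs_add_le S (g t)
      have h1 : η t * |S + g t| ≤ η t * (|S| + |g t|) :=
        mul_le_mul_of_nonneg_left habs hηtn
      have h2 : η t * |S| ≤ η (t-1) * |S| :=
        mul_le_mul_of_nonneg_right hmono (abs_nonneg S)
      linarith [mul_nonneg hRHSfac (mul_nonneg hηtn (abs_nonneg (g t)))]
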